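/- Let f be an entire function with positive Maclaurin coefficients a_n > 0, let P(r) = Σ_{n=0}^∞ p_n a_n r^n / f(r) for a decreasing sequence of probabilities 1 ≥ p_0 ≥ p_1 ≥ ⋯ ≥ 0, and for r > 0 let N_r be a random variable with P(N_r = n) = a_n r^n / f(r). Then for every n and every r > 0, P(r) - P(N_r ≤ n) ≤ p_n ≤ P(r) + P(N_r ≥ n). -/

import Mathlib

/-- Sandwich inequality for generalized de-Poissonization of a monotone sequence of
probabilities: `P(r) - P(N_r ≤ n) ≤ p_n ≤ P(r) + P(N_r ≥ n)`. -/
theorem stmt_7 (a : ℕ → ℝ) (f : ℝ → ℝ)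
    (ha : ∀ n, 0 < a n)
    (hf : ∀ r : ℝ, HasSum (fun n => a n * r ^ n) (f r))
    (p : ℕ → ℝ) (hp1 : p 0 ≤ 1) (hp0 : ∀ n, 0 ≤ p n) (hmono : ∀ n, p (n + 1) ≤ p n)
    (n : ℕ) (r : ℝ) (hr : 0 < r) :
    (∑' m : ℕ, p m * a m * r ^ m) / f r
        - (∑ m ∈ Finset.range (n + 1), a m * r ^ m) / f r ≤ p n ∧
      p n ≤ (∑' m : ℕ, p m * a m * r ^ m) / f r
        + (∑' m : ℕ, a (n + m) * r ^ (n + m)) / f r := by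
  have hanti : Antitone p := antitone_nat_of_succ_le hmono
  have hple1 : ∀ m, p m ≤ 1 := fun m => (hanti (Nat.zero_le m)).trans hp1
  have hterm : ∀ m, 0 < a m * r ^ m := fun m => mul_pos (ha m) (pow_pos hr m)
  have hF : 0 < f r :=
    lt_of_lt_of_le (by simpa using hterm 0)
      (le_hasSum (hf r) 0 fun m _ => (hterm m).le)
  have hsum : Summable (fun m => a m * r ^ m) := (hf r).summable
  have hgsum : Summable (fun m => p m * a m * r ^ m) := by
    apply Summable.of_nonneg_of_le (fun m => mul_nonneg (mul_nonneg (hp0 m) (ha m).le) (pow_pos hr m).le) _ hsum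
    intro m
    have := hterm m
    nlinarith [hp0 m, hple1 m]
  set S := ∑' m : ℕ, p m * a m * r ^ m with hSdef
  have hS : HasSum (fun m => p m * a m * r ^ m) S := hgsum.hasSum
  have htailsum : Summable (fun m => a (n + m) * r ^ (n + m)) := by
    have := (summable_nat_add_iff n).2 hsum
    simpa [add_comm] using this
  set T := ∑' m : ℕ, a (n + m) * r ^ (n + m) with hTdef
  have hT : HasSum (fun m => a (n + m) * r ^ (n + m)) T := htailsum.hasSum
  -- indicator form of a finite range sum
  have hind : ∀ k : ℕ, HasSum (fun m => if m ∈ Finset.range k then a m * r ^ m else 0)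
      (∑ m ∈ Finset.range k, a m * r ^ m) := by
    intro k
    have h := hasSum_sum_of_ne_finset_zero (L := SummationFilter.unconditional ℕ) (s := Finset.range k)
      (f := fun m => if m ∈ Finset.range k then a m * r ^ m else 0)
      (by intro m hm; simp only [if_neg hm])
    have : (∑ m ∈ Finset.range k, if m ∈ Finset.range k then a m * r ^ m else 0)
        = ∑ m ∈ Finset.range k, a m * r ^ m := by
      apply Finset.sum_congr rfl
      intro m hm; simp [hm]
    rwa [this] at h
  -- tail as indicator
  have hT' : HasSum (fun m => if n ≤ m then a m * r ^ m else 0) T := by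
    have h1 : HasSum (fun m => a (m + n) * r ^ (m + n)) T := by
      simpa [add_comm] using hT
    have h2 := (hasSum_nat_add_iff (f := fun m => a m * r ^ m) n).1 h1
    have h4 := h2.sub (hind n)
    have heq : (fun m => if n ≤ m then a m * r ^ m else 0)
        = fun m => a m * r ^ m - if m ∈ Finset.range n then a m * r ^ m else 0 := by
      funext m
      rcases le_or_gt n m with h | h
      · simp [h, Finset.mem_range, Nat.not_lt.mpr h]
      · simp [Finset.mem_range, h, Nat.not_le.mpr h]
    rw [heq]
    simpa using h4
  have key1 : S - p n * f r ≤ ∑ m ∈ Finset.range (n + 1), a m * r ^ m := by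
    have hL : HasSum (fun m => p m * a m * r ^ m - p n * (a m * r ^ m)) (S - p n * f r) :=
      hS.sub ((hf r).mul_left (p n))
    refine hasSum_le ?_ hL (hind (n + 1))
    intro m
    rcases le_or_gt m n with h | h
    · have h1 : p m ≤ 1 := hple1 m
      have h2 : 0 ≤ p n := hp0 n
      have h3 := hterm m
      simp only [Finset.mem_range, if_pos (Nat.lt_succ_of_le h)]
      nlinarith
    · have h1 : p m ≤ p n := hanti h.le
      have h3 := (hterm m).le
      simp only [Finset.mem_range, if_neg (by omega : ¬ m < n + 1)]
      nlinarith
  have key2 : p n * f r ≤ S + T := by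
    have hL : HasSum (fun m => p n * (a m * r ^ m)) (p n * f r) := (hf r).mul_left _
    have hR : HasSum (fun m => p m * a m * r ^ m + if n ≤ m then a m * r ^ m else 0)
        (S + T) := hS.add hT'
    refine hasSum_le ?_ hL hR
    intro m
    rcases le_or_gt n m with h | h
    · have h1 : p n ≤ 1 := hple1 n
      have h2 : 0 ≤ p m := hp0 m
      have h3 := (hterm m).le
      simp only [if_pos h]
      nlinarith
    · have h1 : p n ≤ p m := hanti h.le
      have h3 := (hterm m).le
      simp only [if_neg (Nat.not_le.mpr h)]
      nlinarith
  constructor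
  · rw [div_sub_div_same, div_le_iff₀ hF]
    linarith
  · rw [← add_div, le_div_iff₀ hF]
    linarith
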